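/- Let λ > 0, D > 0, T > 0, ε ∈ (0,1), and L ≥ 2 an integer. Define E_B(μ) = T·ln(1/ε) / (D·ln(T·ln(1/ε)/(μ·D) + 1)) for μ > 0. Then L · E_B(λ/L) > E_B(λ). -/

import Mathlib

theorem stmt_2 (lam D T eps : ℝ) (hlam : 0 < lam) (hD : 0 < D) (hT : 0 < T)
    (heps : eps ∈ Set.Ioo (0 : ℝ) 1) (L : ℕ) (hL : 2 ≤ L)
    (EB : ℝ → ℝ)
    (hEB : ∀ mu : ℝ, 0 < mu →
      EB mu = T * Real.log (1 / eps) / (D * Real.log (T * Real.log (1 / eps) / (mu * D) + 1))) :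
    (L : ℝ) * EB (lam / L) > EB lam := by
  obtain ⟨he0, he1⟩ := heps
  have hLpos : (0:ℝ) < L := by positivity
  have hla : 0 < lam / L := div_pos hlam hLpos
  have hlog : 0 < Real.log (1 / eps) :=
    Real.log_pos (one_lt_one_div he0 he1)
  set c := T * Real.log (1 / eps) with hcdef
  have hc : 0 < c := mul_pos hT hlog
  rw [hEB lam hlam, hEB _ hla]
  set a := c / (lam * D) with hadef
  have ha : 0 < a := div_pos hc (mul_pos hlam hD)
  have hrewrite : c / (lam / L * D) = L * a := by
    field_simp [hadef]
    rw [hadef]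
    field_simp [hlam.ne', hD.ne']
  rw [hrewrite]
  -- key: log (L*a + 1) < L * log (a + 1)
  have hkey : Real.log ((L:ℝ) * a + 1) < (L:ℝ) * Real.log (a + 1) := by
    have hL1 : (1:ℝ) < (L:ℝ) := by exact_mod_cast (by omega : 1 < L)
    have hpow : 1 + (L:ℝ) * a < (1 + a) ^ L := by
      have := one_add_mul_self_lt_rpow_one_add (s := a) (by linarith) (ne_of_gt ha) hL1
      rwa [Real.rpow_natCast] at this
    have h1 : Real.log ((L:ℝ) * a + 1) < Real.log ((1 + a) ^ L) :=
      Real.log_lt_log (by positivity) (by linarith)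
    rw [Real.log_pow] at h1
    rw [add_comm a 1]
    exact_mod_cast h1

  have hl1 : 0 < Real.log (a + 1) := Real.log_pos (by linarith)
  have hl2 : 0 < Real.log ((L:ℝ) * a + 1) := Real.log_pos (by nlinarith)
  rw [gt_iff_lt, mul_div_assoc', div_lt_div_iff₀ (by positivity) (by positivity)]
  nlinarith [mul_pos hc hl2, mul_pos hc hl1, mul_pos hD (mul_pos hc hl2)]
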